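/- Let h(z) = (1−3z)² / (1 − c²(1−3z)²(1−3z²)) and set x = y = −z/(3c² h(z/3)), P = −c² h(z/3), u = c. Then P, x, y, u satisfy the algebraic equation P = 1 + 3xyP³ + P(1+3xP)(1+3yP) / (u²(1−9xyP²)²), wherever both sides are defined. -/

import Mathlib

/-- The change of variables identifying the Boulatov–Kazakov solution of the Ising
matrix model with the Bousquet-Mélou–Schaeffer algebraic equation: with
`h(z) = (1-3z)²/(1 - c²(1-3z)²(1-3z²))`, `x = y = -z/(3c² h(z/3))`,
`P = -c² h(z/3)`, `u = c`, one has
`P = 1 + 3xyP³ + P(1+3xP)(1+3yP)/(u²(1-9xyP²)²)` wherever both sides are defined. -/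
theorem ising_algebraic_equation_change_of_variables
    (z c : ℝ) (hc : c ≠ 0)
    (hden : 1 - c ^ 2 * (1 - 3 * (z / 3)) ^ 2 * (1 - 3 * (z / 3) ^ 2) ≠ 0)
    (hH : (1 - 3 * (z / 3)) ^ 2 /
        (1 - c ^ 2 * (1 - 3 * (z / 3)) ^ 2 * (1 - 3 * (z / 3) ^ 2)) ≠ 0) :
    let h : ℝ := (1 - 3 * (z / 3)) ^ 2 /
      (1 - c ^ 2 * (1 - 3 * (z / 3)) ^ 2 * (1 - 3 * (z / 3) ^ 2))
    let P : ℝ := -c ^ 2 * h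
    let x : ℝ := -z / (3 * c ^ 2 * h)
    let y : ℝ := x
    let u : ℝ := c
    1 - 9 * x * y * P ^ 2 ≠ 0 →
      P = 1 + 3 * x * y * P ^ 3 +
        P * (1 + 3 * x * P) * (1 + 3 * y * P) / (u ^ 2 * (1 - 9 * x * y * P ^ 2) ^ 2) := by
  intro h P x y u hne
  have hh : h ≠ 0 := hH
  have key : h * (1 - c ^ 2 * (1 - 3 * (z / 3)) ^ 2 * (1 - 3 * (z / 3) ^ 2)) =
      (1 - 3 * (z / 3)) ^ 2 := div_mul_cancel₀ _ hden
  have hxP : x * P = z / 3 := by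
    show -z / (3 * c ^ 2 * h) * (-c ^ 2 * h) = z / 3
    field_simp
  have e1 : 3 * x * y * P ^ 3 = z ^ 2 / 3 * P := by
    show 3 * x * x * P ^ 3 = z ^ 2 / 3 * P
    linear_combination ((3 * (x * P) + z) * P) * hxP
  have e2 : 1 + 3 * x * P = 1 + z := by linear_combination 3 * hxP
  have e3 : 1 - 9 * x * y * P ^ 2 = 1 - z ^ 2 := by
    show 1 - 9 * x * x * P ^ 2 = 1 - z ^ 2
    linear_combination (-(3 * (x * P) + z) * 3) * hxP
  rw [e3] at hne
  rw [e1, e2, e3]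
  show -c ^ 2 * h = 1 + z ^ 2 / 3 * (-c ^ 2 * h) +
    -c ^ 2 * h * (1 + z) * (1 + z) / (c ^ 2 * (1 - z ^ 2) ^ 2)
  clear_value u y x P h
  field_simp [hc, hne]
  linear_combination (3 * (1 + z) ^ 2) * key
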